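/- arXiv:2307.07237 — 5 statements merged into one kernel-verified Lean document; each statement's English description precedes it below -/
import Mathlib

section
/- Let Z = {z_1 < z_2 < ... < z_m} be a finite set of integers with consecutive gaps z_{i+1} − z_i ≤ K for some K > 0. Then Z contains an arithmetic progression of length w(K, ⌊m/K⌋), where w(s, N) is the largest L such that every s-coloring of {1,...,N} contains a monochromatic arithmetic progression of length L. -/
/-- Every `s`-coloring of `{1,...,N}` admits a monochromatic arithmetic
progression of length `L`. -/
def hasMonoAP (s N L : ℕ) : Prop :=
  ∀ c : ℕ → Fin s, ∃ a d : ℕ, 1 ≤ d ∧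
    (∀ j < L, a + j * d ∈ Finset.Icc 1 N) ∧ (∀ j < L, c (a + j * d) = c a)

/-- The inverse van der Waerden function `w(s, N)`: the largest `L` such that
every `s`-coloring of `{1,...,N}` has a monochromatic AP of length `L`. -/
noncomputable def invVdW (s N : ℕ) : ℕ := sSup {L | hasMonoAP s N L}

lemma exists_near (K : ℕ) (hK : 0 < K) (z : ℕ → ℤ) :
    ∀ m : ℕ, 1 ≤ m →
    (∀ i, 1 ≤ i → i < m → z (i + 1) - z i ≤ (K : ℤ)) →
    ∀ p : ℤ, z 1 ≤ p → p ≤ z m →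
    ∃ i, 1 ≤ i ∧ i ≤ m ∧ p ≤ z i ∧ z i ≤ p + K - 1 := by
  intro m
  induction m with
  | zero => omega
  | succ n ih =>
    intro _ hgap p h1 h2
    by_cases hn : 1 ≤ n
    · by_cases hp : p ≤ z n
      · obtain ⟨i, hi1, hi2, hi3, hi4⟩ := ih hn (fun i a b => hgap i a (by omega)) p h1 hp
        exact ⟨i, hi1, by omega, hi3, hi4⟩
      · push_neg at hp
        refine ⟨n + 1, by omega, le_refl _, h2, ?_⟩
        have := hgap n hn (by omega)
        omega
    · have hn0 : n = 0 := by omega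
      subst hn0
      have hK1 : (1 : ℤ) ≤ (K : ℤ) := by exact_mod_cast hK
      exact ⟨1, le_refl _, le_refl _, h2, by omega⟩

lemma span_ge (z : ℕ → ℤ) :
    ∀ m : ℕ, (∀ i, 1 ≤ i → i < m → z i < z (i + 1)) → 1 ≤ m →
    (m : ℤ) - 1 ≤ z m - z 1 := by
  intro m
  induction m with
  | zero => omega
  | succ n ih =>
    intro hmono _
    by_cases hn : 1 ≤ n
    · have h := ih (fun i a b => hmono i a (by omega)) hn
      have h2 := hmono n hn (by omega)
      push_cast
      omega
    · have hn0 : n = 0 := by omega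
      subst hn0
      push_cast
      omega

/-- a finite increasing sequence of integers with gaps `≤ K`
contains an arithmetic progression of length `w(K, ⌊m/K⌋)`. -/
theorem bounded_gaps_contains_AP
    (m K : ℕ) (hK : 0 < K) (z : ℕ → ℤ)
    (hmono : ∀ i, 1 ≤ i → i < m → z i < z (i + 1))
    (hgap : ∀ i, 1 ≤ i → i < m → z (i + 1) - z i ≤ (K : ℤ)) :
    ∃ a d : ℤ, 1 ≤ d ∧
      ∀ j < invVdW K (m / K), ∃ i, 1 ≤ i ∧ i ≤ m ∧ z i = a + (j : ℤ) * d := by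
  classical
  set N := m / K with hN
  set L := invVdW K N with hLdef
  have hK1 : (1 : ℤ) ≤ (K : ℤ) := by exact_mod_cast hK
  by_cases hL0 : L = 0
  · exact ⟨0, 1, le_refl _, fun j hj => absurd hj (by omega)⟩
  -- the key existence: for 1 ≤ x ≤ N there is an element of Z in [p x, p x + K - 1]
  have key : ∀ x : ℕ, ∃ i : ℕ, 1 ≤ x → x ≤ N →
      1 ≤ i ∧ i ≤ m ∧ z 1 + ((x : ℤ) - 1) * K ≤ z i ∧
        z i ≤ z 1 + ((x : ℤ) - 1) * K + K - 1 := by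
    intro x
    by_cases hx : 1 ≤ x ∧ x ≤ N
    · obtain ⟨hx1, hx2⟩ := hx
      have hNm : K ≤ m := by
        have : 1 ≤ N := le_trans hx1 hx2
        rw [hN, Nat.one_le_div_iff hK] at this
        exact this
      have hm1 : 1 ≤ m := le_trans hK hNm
      have hspan := span_ge z m hmono hm1
      have hp1 : z 1 ≤ z 1 + ((x : ℤ) - 1) * K := by
        have h0 : (0 : ℤ) ≤ ((x : ℤ) - 1) * K := by
          apply mul_nonneg
          · have : (1 : ℤ) ≤ (x : ℤ) := by exact_mod_cast hx1
            omega
          · positivity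
        omega
      have hp2 : z 1 + ((x : ℤ) - 1) * K ≤ z m := by
        have hnat : (x - 1) * K ≤ m - K := by
          have h1 : (x - 1) * K ≤ (N - 1) * K := by
            apply Nat.mul_le_mul_right
            omega
          have h2 : N * K ≤ m := by
            rw [hN]; exact Nat.div_mul_le_self m K
          have h3 : (N - 1) * K = N * K - K := by
            cases N with
            | zero => simp
            | succ n => simp [Nat.succ_mul]
          omega
        zify [hx1, hNm] at hnat
        omega
      obtain ⟨i, hi⟩ := exists_near K hK z m hm1 hgap _ hp1 hp2
      exact ⟨i, fun _ _ => ⟨hi.1, hi.2.1, hi.2.2.1, hi.2.2.2⟩⟩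
    · exact ⟨0, fun h1 h2 => absurd ⟨h1, h2⟩ hx⟩
  choose idx hidx using key
  -- the coloring
  set c : ℕ → Fin K := fun x =>
    ⟨(z (idx x) - (z 1 + ((x : ℤ) - 1) * K)).toNat % K, Nat.mod_lt _ hK⟩ with hc
  -- invVdW is attained
  have Hmem0 : hasMonoAP K N 0 := by
    intro c'
    exact ⟨0, 1, le_refl _, fun j hj => absurd hj (by omega), fun j hj => absurd hj (by omega)⟩
  have Hbdd : ∀ L' ∈ {L' | hasMonoAP K N L'}, L' ≤ N := by
    intro L' hL'
    obtain ⟨a, d, hd, hmem, _⟩ := hL' (fun _ => ⟨0, hK⟩)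
    rcases Nat.eq_zero_or_pos L' with h | h
    · exact h ▸ Nat.zero_le N
    have h1 := hmem 0 h
    have h2 := hmem (L' - 1) (by omega)
    simp only [Finset.mem_Icc] at h1 h2
    have h3 : L' - 1 ≤ (L' - 1) * d := Nat.le_mul_of_pos_right _ hd
    omega
  have H : hasMonoAP K N L := by
    rw [hLdef, invVdW]
    exact Nat.sSup_mem ⟨0, Set.mem_setOf_eq ▸ Hmem0⟩ ⟨N, fun _ h => Hbdd _ h⟩
  obtain ⟨a, d, hd, hmem, hcol⟩ := H c
  have ha := hmem 0 (Nat.pos_of_ne_zero hL0)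
  simp only [Finset.mem_Icc, Nat.zero_mul, Nat.add_zero] at ha
  have hidxa := hidx a ha.1 ha.2
  set r : ℤ := z (idx a) - (z 1 + ((a : ℤ) - 1) * K) with hr
  refine ⟨z 1 + ((a : ℤ) - 1) * K + r, (d : ℤ) * K, ?_, ?_⟩
  · have hd1 : (1 : ℤ) ≤ (d : ℤ) := by exact_mod_cast hd
    nlinarith
  · intro j hj
    have hjL : j < L := hj
    have hx := hmem j hjL
    simp only [Finset.mem_Icc] at hx
    have hcj := hcol j hjL
    set x := a + j * d with hxdef
    have hidxx := hidx x hx.1 hx.2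
    refine ⟨idx x, hidxx.1, hidxx.2.1, ?_⟩
    -- extract equality of offsets from color equality
    have hcj' : (z (idx x) - (z 1 + ((x : ℤ) - 1) * K)).toNat % K
        = (z (idx a) - (z 1 + ((a : ℤ) - 1) * K)).toNat % K := by
      simpa [hc, Fin.mk.injEq] using hcj
    have hbx1 := hidxx.2.2.1
    have hbx2 := hidxx.2.2.2
    have hba1 := hidxa.2.2.1
    have hba2 := hidxa.2.2.2
    have hmodx : (z (idx x) - (z 1 + ((x : ℤ) - 1) * K)).toNat % K
        = (z (idx x) - (z 1 + ((x : ℤ) - 1) * K)).toNat := Nat.mod_eq_of_lt (by omega)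
    have hmoda : (z (idx a) - (z 1 + ((a : ℤ) - 1) * K)).toNat % K
        = (z (idx a) - (z 1 + ((a : ℤ) - 1) * K)).toNat := Nat.mod_eq_of_lt (by omega)
    have heq : z (idx x) - (z 1 + ((x : ℤ) - 1) * K)
        = z (idx a) - (z 1 + ((a : ℤ) - 1) * K) := by
      rw [hmodx, hmoda] at hcj'
      omega
    have hxcast : ((x : ℕ) : ℤ) = (a : ℤ) + (j : ℤ) * (d : ℤ) := by
      rw [hxdef]; push_cast; ring
    rw [← hr] at heq
    have : z (idx x) = z 1 + ((x : ℤ) - 1) * K + r := by omega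
    rw [this, hxcast]
    ring
end

section
/- Let 1 < α < 2 be a real number whose binary expansion has infinitely many nonzero digits, and let C₂ = FS({⌊2^n α⌋}_{n=0}^∞) be the set of finite subset sums. Then C₂ + C₂ = ℕ, i.e., every nonnegative integer is a sum of two elements of C₂. -/
/-- The set of finite subset sums of a sequence `X` (0 included as the empty sum). -/
def FS (X : ℕ → ℕ) : Set ℕ := {m | ∃ I : Finset ℕ, m = ∑ i ∈ I, X i}

/-- Key combinatorial lemma: if `b 0 = 1` and `2 * b k ≤ b (k+1) ≤ 2 * b k + 1`,
then every `n` is a sum of two subset sums of `b`, using only indices `i` with `b i ≤ n`. -/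
lemma key_two_subset_sums (b : ℕ → ℕ) (hb0 : b 0 = 1)
    (hdouble : ∀ k, 2 * b k ≤ b (k + 1))
    (hup : ∀ k, b (k + 1) ≤ 2 * b k + 1) :
    ∀ n : ℕ, ∃ I J : Finset ℕ,
      n = (∑ i ∈ I, b i) + (∑ j ∈ J, b j) ∧ ∀ i, (i ∈ I ∨ i ∈ J) → b i ≤ n := by
  have hpos : ∀ k, 1 ≤ b k := by
    intro k
    induction k with
    | zero => omega
    | succ k ih => have := hdouble k; omega
  have hmono : StrictMono b := by
    apply strictMono_nat_of_lt_succ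
    intro k
    have := hdouble k
    have := hpos k
    omega
  have hgrow : ∀ n : ℕ, n < b (n + 1) := by
    intro n
    have : n + 1 ≤ b (n + 1) := hmono.le_apply
    omega
  intro n
  induction n using Nat.strong_induction_on with
  | _ n ih =>
    rcases Nat.eq_zero_or_pos n with rfl | hn
    · exact ⟨∅, ∅, by simp, by simp⟩
    · have hex : ∃ k, n < b k := ⟨n + 1, hgrow n⟩
      have hk'pos : 0 < Nat.find hex := by
        rcases Nat.eq_zero_or_pos (Nat.find hex) with h0 | h
        · have := Nat.find_spec hex
          rw [h0, hb0] at this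
          omega
        · exact h
      obtain ⟨k, hk⟩ : ∃ k, Nat.find hex = k + 1 := ⟨Nat.find hex - 1, by omega⟩
      have hbk : b k ≤ n := by
        by_contra hcon
        have := Nat.find_min hex (m := k) (by omega)
        omega
      have hlt : n < b (k + 1) := by
        have := Nat.find_spec hex
        rwa [hk] at this
      have hle : n ≤ 2 * b k := by have := hup k; omega
      rcases lt_or_eq_of_le (show n - b k ≤ b k by omega) with hmlt | hmeq
      · have hmn : n - b k < n := by have := hpos k; omega
        obtain ⟨I, J, hsumIJ, hbound⟩ := ih (n - b k) hmn
        have hkI : k ∉ I := fun h => absurd (hbound k (Or.inl h)) (by omega)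
        refine ⟨insert k I, J, ?_, ?_⟩
        · rw [Finset.sum_insert hkI]; omega
        · intro i hi
          rcases hi with hi | hi
          · rcases Finset.mem_insert.mp hi with rfl | hi
            · omega
            · exact le_trans (hbound i (Or.inl hi)) (by omega)
          · exact le_trans (hbound i (Or.inr hi)) (by omega)
      · refine ⟨{k}, {k}, by simp; omega, ?_⟩
        intro i hi
        have : i = k := by rcases hi with hi | hi <;> simpa using hi
        subst this
        omega

/-- for `C₂ = FS({⌊2^n α⌋})` with `1 < α < 2` having infinitely
many nonzero binary digits, `C₂ + C₂ = ℕ`. -/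
theorem C2_add_C2_eq_N
    (α : ℝ) (hα1 : 1 < α) (hα2 : α < 2)
    (ε : ℕ → ℕ) (hε : ∀ i, ε i ≤ 1) (hε0 : ε 0 = 1)
    (hsum : α = ∑' i, (ε i : ℝ) / 2 ^ i)
    (hinf : ∀ N : ℕ, ∃ i, N < i ∧ ε i ≠ 0) :
    ∀ n : ℕ, ∃ x ∈ FS (fun k => ⌊2 ^ k * α⌋₊), ∃ y ∈ FS (fun k => ⌊2 ^ k * α⌋₊),
      n = x + y := by
  set b : ℕ → ℕ := fun k => ⌊2 ^ k * α⌋₊ with hb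
  have hαpos : (0 : ℝ) < α := by linarith
  have hxpos : ∀ k : ℕ, (0 : ℝ) ≤ 2 ^ k * α := by
    intro k
    exact mul_nonneg (by positivity) hαpos.le
  have hb0 : b 0 = 1 := by
    simp only [hb, pow_zero, one_mul]
    rw [Nat.floor_eq_iff hαpos.le]
    constructor <;> [push_cast; push_cast] <;> linarith
  have hkey : ∀ k, (2 : ℝ) ^ (k + 1) * α = 2 * (2 ^ k * α) := by
    intro k; ring
  have hdouble : ∀ k, 2 * b k ≤ b (k + 1) := by
    intro k
    simp only [hb]
    rw [Nat.le_floor_iff (hxpos (k + 1)), hkey k]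
    push_cast
    have := Nat.floor_le (hxpos k)
    linarith
  have hup : ∀ k, b (k + 1) ≤ 2 * b k + 1 := by
    intro k
    simp only [hb]
    have h1 : (2 : ℝ) ^ (k + 1) * α < 2 * (⌊2 ^ k * α⌋₊ + 1) := by
      rw [hkey k]
      have := Nat.lt_floor_add_one (2 ^ k * α)
      linarith
    have h2 : ⌊2 ^ (k + 1) * α⌋₊ < 2 * ⌊2 ^ k * α⌋₊ + 2 := by
      rw [Nat.floor_lt (hxpos (k + 1))]
      push_cast
      linarith
    omega
  intro n
  obtain ⟨I, J, hsumIJ, -⟩ := key_two_subset_sums b hb0 hdouble hup n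
  exact ⟨∑ i ∈ I, b i, ⟨I, rfl⟩, ∑ j ∈ J, b j, ⟨J, rfl⟩, hsumIJ⟩
end

section
/- Let 1 < α < 2 with binary expansion having infinitely many nonzero digits, a_n = ⌊2^n α⌋, s_n = Σ_{i=0}^n a_i, and C₂ = FS({a_n}). Then for every n ≥ 0, the integer interval [0, s_n] is contained in C₂ + C₂. -/
lemma key_aux (a : ℕ → ℕ) (ha0 : a 0 = 1) (hstep : ∀ j, a (j + 1) ≤ 2 * a j + 1) :
    ∀ n : ℕ, ∀ k ≤ 2 * ∑ i ∈ Finset.range (n + 1), a i,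
      ∃ I : Finset ℕ, I ⊆ Finset.range (n + 1) ∧
      ∃ J : Finset ℕ, J ⊆ Finset.range (n + 1) ∧
        k = (∑ i ∈ I, a i) + ∑ i ∈ J, a i := by
  intro n
  induction n with
  | zero =>
    intro k hk
    rw [Finset.sum_range_one, ha0] at hk
    interval_cases k
    · exact ⟨∅, by simp, ∅, by simp, by simp⟩
    · exact ⟨{0}, by simp, ∅, by simp, by simp [ha0]⟩
    · exact ⟨{0}, by simp, {0}, by simp, by simp [ha0]⟩
  | succ n ih =>
    intro k hk
    have hsub : Finset.range (n+1) ⊆ Finset.range (n+2) :=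
      Finset.range_subset_range.mpr (by omega)
    rw [Finset.sum_range_succ] at hk
    have han_le : a n ≤ ∑ i ∈ Finset.range (n + 1), a i :=
      Finset.single_le_sum (fun i _ => Nat.zero_le _) (Finset.self_mem_range_succ n)
    have hbound : a (n+1) ≤ 2 * ∑ i ∈ Finset.range (n + 1), a i + 1 :=
      le_trans (hstep n) (by omega)
    have hnotmem : ∀ I : Finset ℕ, I ⊆ Finset.range (n+1) → n+1 ∉ I := by
      intro I hI hmem
      have := hI hmem
      simp [Finset.mem_range] at this
    rcases le_or_gt k (2 * ∑ i ∈ Finset.range (n + 1), a i) with h | h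
    · obtain ⟨I, hI, J, hJ, hIJ⟩ := ih k h
      exact ⟨I, hI.trans hsub, J, hJ.trans hsub, hIJ⟩
    · rcases le_or_gt (k - a (n+1)) (2 * ∑ i ∈ Finset.range (n + 1), a i) with h2 | h2
      · obtain ⟨I, hI, J, hJ, hIJ⟩ := ih (k - a (n+1)) h2
        refine ⟨insert (n+1) I, ?_, J, hJ.trans hsub, ?_⟩
        · exact Finset.insert_subset (Finset.mem_range.mpr (by omega)) (hI.trans hsub)
        · rw [Finset.sum_insert (hnotmem I hI)]
          omega
      · obtain ⟨I, hI, J, hJ, hIJ⟩ := ih (k - 2 * a (n+1)) (by omega)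
        refine ⟨insert (n+1) I, ?_, insert (n+1) J, ?_, ?_⟩
        · exact Finset.insert_subset (Finset.mem_range.mpr (by omega)) (hI.trans hsub)
        · exact Finset.insert_subset (Finset.mem_range.mpr (by omega)) (hJ.trans hsub)
        · rw [Finset.sum_insert (hnotmem I hI), Finset.sum_insert (hnotmem J hJ)]
          omega

/-- for every `n`, the integer interval `[0, s_n]` is contained
in `C₂ + C₂`, where `C₂ = FS({⌊2^n α⌋})`. -/
theorem interval_subset_C2_add_C2
    (α : ℝ) (hα1 : 1 < α) (hα2 : α < 2)
    (ε : ℕ → ℕ) (hε : ∀ i, ε i ≤ 1) (hε0 : ε 0 = 1)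
    (hsum : α = ∑' i, (ε i : ℝ) / 2 ^ i)
    (hinf : ∀ N : ℕ, ∃ i, N < i ∧ ε i ≠ 0) :
    ∀ n : ℕ, ∀ k ≤ ∑ i ∈ Finset.range (n + 1), ⌊(2 : ℝ) ^ i * α⌋₊,
      ∃ x ∈ FS (fun j => ⌊(2 : ℝ) ^ j * α⌋₊),
      ∃ y ∈ FS (fun j => ⌊(2 : ℝ) ^ j * α⌋₊), k = x + y := by
  intro n k hk
  have ha0 : ⌊(2 : ℝ) ^ 0 * α⌋₊ = 1 := by
    rw [pow_zero, one_mul, Nat.floor_eq_iff (by linarith)]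
    norm_num
    constructor <;> linarith
  have hstep : ∀ j : ℕ, ⌊(2 : ℝ) ^ (j+1) * α⌋₊ ≤ 2 * ⌊(2 : ℝ) ^ j * α⌋₊ + 1 := by
    intro j
    have hy : (0:ℝ) ≤ (2:ℝ) ^ j * α := by positivity
    have h1 : (2:ℝ) ^ j * α < (⌊(2 : ℝ) ^ j * α⌋₊ : ℝ) + 1 := Nat.lt_floor_add_one _
    have h2 : ⌊(2 : ℝ) ^ (j+1) * α⌋₊ < 2 * ⌊(2 : ℝ) ^ j * α⌋₊ + 1 + 1 := by
      apply (Nat.floor_lt (by positivity)).mpr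
      push_cast
      rw [pow_succ]
      nlinarith
    omega
  obtain ⟨I, _, J, _, hIJ⟩ :=
    key_aux (fun j => ⌊(2 : ℝ) ^ j * α⌋₊) ha0 hstep n k (by beta_reduce; omega)
  exact ⟨_, ⟨I, rfl⟩, _, ⟨J, rfl⟩, hIJ⟩
end

section
/- Let Z ⊆ {1, ..., N} with |Z| = m and consecutive-gap bound K (between consecutive elements of Z in increasing order). For any L, if every K-coloring of {1, ..., ⌊m/K⌋} admits a monochromatic arithmetic progression of length L, then Z contains an arithmetic progression of length L. -/
/-- if every `K`-coloring of `{1,...,⌊m/K⌋}` has a monochromatic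
AP of length `L`, then a set `Z ⊆ {1,...,N}` of `m` elements with consecutive
gaps `≤ K` contains an AP of length `L`. -/
theorem AP_in_bounded_gap_set
    (N m K L : ℕ) (hK : 0 < K) (z : ℕ → ℕ)
    (hmono : ∀ i, 1 ≤ i → i < m → z i < z (i + 1))
    (hrange : ∀ i, 1 ≤ i → i ≤ m → z i ∈ Finset.Icc 1 N)
    (hgap : ∀ i, 1 ≤ i → i < m → z (i + 1) - z i ≤ K)
    (hvdW : ∀ c : ℕ → Fin K, ∃ a d : ℕ, 1 ≤ d ∧
      (∀ j < L, a + j * d ∈ Finset.Icc 1 (m / K)) ∧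
      (∀ j < L, c (a + j * d) = c a)) :
    ∃ a d : ℕ, 1 ≤ d ∧ ∀ j < L, ∃ i, 1 ≤ i ∧ i ≤ m ∧ z i = a + j * d := by
  classical
  rcases Nat.eq_zero_or_pos L with hL | hL
  · exact ⟨0, 1, le_refl 1, fun j hj => absurd hj (by omega)⟩
  -- T i = left endpoint of the i-th window
  set T : ℕ → ℕ := fun i => z 1 + (i - 1) * K with hT
  -- lower bound: z j ≥ z 1 + (j - 1)
  have hzl : ∀ j, 1 ≤ j → j ≤ m → z 1 + (j - 1) ≤ z j := by
    intro j
    induction j with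
    | zero => omega
    | succ n ih =>
      intro h1 h2
      by_cases hn : n = 0
      · subst hn; simp
      · have h3 := hmono n (by omega) (by omega)
        have h4 := ih (by omega) (by omega)
        omega
  -- key: each window [T i, T i + K) contains an element of Z
  have key : ∀ i, 1 ≤ i → i ≤ m / K →
      ∃ j, 1 ≤ j ∧ j ≤ m ∧ T i ≤ z j ∧ z j < T i + K := by
    intro i h1 h2
    have hiK : i * K ≤ m := (Nat.le_div_iff_mul_le hK).mp h2
    have hiK' : (i - 1) * K + K = i * K := by
      cases i with
      | zero => omega
      | succ n => simp [Nat.succ_sub_one, Nat.succ_mul]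
    have hKm : K ≤ m := by omega
    have hm1 : 1 ≤ m := le_trans hK hKm
    have hTm : T i ≤ z m := by
      have := hzl m hm1 (le_refl m)
      show z 1 + (i - 1) * K ≤ z m
      omega
    set S : Finset ℕ := (Finset.Icc 1 m).filter (fun j => T i ≤ z j) with hS
    have hmS : m ∈ S := by
      simp [hS, Finset.mem_filter, Finset.mem_Icc, hm1, hTm]
    have hne : S.Nonempty := ⟨m, hmS⟩
    set j := S.min' hne with hj
    have hjS : j ∈ S := S.min'_mem hne
    have hj1 : 1 ≤ j := by
      have := (Finset.mem_filter.mp hjS).1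
      exact (Finset.mem_Icc.mp this).1
    have hjm : j ≤ m := by
      have := (Finset.mem_filter.mp hjS).1
      exact (Finset.mem_Icc.mp this).2
    have hjT : T i ≤ z j := (Finset.mem_filter.mp hjS).2
    refine ⟨j, hj1, hjm, hjT, ?_⟩
    by_cases hj1' : j = 1
    · have : z 1 ≤ T i := by simp [hT]
      rw [hj1'] at hjT ⊢
      omega
    · have hj2 : 2 ≤ j := by omega
      have hnotS : j - 1 ∉ S := by
        intro hmem
        have := S.min'_le _ hmem
        omega
      have hzj1 : z (j - 1) < T i := by
        by_contra hc
        apply hnotS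
        simp only [hS, Finset.mem_filter, Finset.mem_Icc]
        exact ⟨⟨by omega, by omega⟩, by omega⟩
      have hgap' := hgap (j - 1) (by omega) (by omega)
      have hmono' := hmono (j - 1) (by omega) (by omega)
      have hjeq : j - 1 + 1 = j := by omega
      rw [hjeq] at hgap' hmono'
      omega
  -- the selector function
  set g : ℕ → ℕ := fun i =>
    if h : 1 ≤ i ∧ i ≤ m / K then (key i h.1 h.2).choose else 1 with hg
  set c : ℕ → Fin K := fun i => ⟨(z (g i) - T i) % K, Nat.mod_lt _ hK⟩ with hc
  obtain ⟨a, d, hd, hIcc, hmc⟩ := hvdW c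
  have ha : 1 ≤ a ∧ a ≤ m / K := by
    have := hIcc 0 hL
    simpa using Finset.mem_Icc.mp this
  -- spec at any point in range
  have spec : ∀ i, 1 ≤ i → i ≤ m / K →
      1 ≤ g i ∧ g i ≤ m ∧ T i ≤ z (g i) ∧ z (g i) < T i + K := by
    intro i h1 h2
    have hgi : g i = (key i h1 h2).choose := dif_pos ⟨h1, h2⟩
    rw [hgi]
    exact (key i h1 h2).choose_spec
  have cval : ∀ i, 1 ≤ i → i ≤ m / K → (c i : ℕ) = z (g i) - T i := by
    intro i h1 h2
    obtain ⟨_, _, h3, h4⟩ := spec i h1 h2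
    simp only [hc]
    exact Nat.mod_eq_of_lt (by omega)
  set r := z (g a) - T a with hr
  refine ⟨z 1 + (a - 1) * K + r, d * K, Nat.one_le_iff_ne_zero.mpr (by positivity), ?_⟩
  intro j hj
  have hij := Finset.mem_Icc.mp (hIcc j hj)
  set i := a + j * d with hi
  obtain ⟨hs1, hs2, hs3, hs4⟩ := spec i hij.1 hij.2
  refine ⟨g i, hs1, hs2, ?_⟩
  have hcc : (c i : ℕ) = (c a : ℕ) := by rw [hmc j hj]
  rw [cval i hij.1 hij.2, cval a ha.1 ha.2] at hcc
  -- z (g i) = T i + r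
  have hzgi : z (g i) = T i + r := by omega
  have hTi : T i = z 1 + (a - 1 + j * d) * K := by
    simp only [hT, hi]
    congr 1
    congr 1
    omega
  rw [hzgi, hTi]
  ring
end

section
/- Let 1 < α < 2 with binary expansion having infinitely many nonzero digits and let C₂ = FS({⌊2^n α⌋}). Then the difference set C₂ − C₂ equals ℤ, i.e., every integer is a difference of two elements of C₂. -/
namespace C2aux

variable {α : ℝ}

lemma Xge (hα1 : 1 < α) (k : ℕ) : 2 ^ k ≤ ⌊(2:ℝ) ^ k * α⌋₊ := by
  apply Nat.le_floor
  push_cast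
  nlinarith [pow_pos (by norm_num : (0:ℝ) < 2) k]

lemma Xone (hα1 : 1 < α) (hα2 : α < 2) : ⌊(2:ℝ) ^ 0 * α⌋₊ = 1 := by
  rw [pow_zero, one_mul]
  have h1 : 1 ≤ ⌊α⌋₊ := Nat.le_floor (by exact_mod_cast hα1.le)
  have h2 : ⌊α⌋₊ < 2 := by
    rw [Nat.floor_lt (by linarith)]
    exact_mod_cast hα2
  omega

lemma Xstep (hα1 : 1 < α) (k : ℕ) :
    ⌊(2:ℝ) ^ (k+1) * α⌋₊ ≤ 2 * ⌊(2:ℝ) ^ k * α⌋₊ + 1 := by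
  have hα0 : (0:ℝ) < α := by linarith
  have h0 : (0:ℝ) ≤ (2:ℝ) ^ (k+1) * α := by positivity
  have hlt : (2:ℝ) ^ k * α < ⌊(2:ℝ) ^ k * α⌋₊ + 1 := Nat.lt_floor_add_one _
  have : ⌊(2:ℝ) ^ (k+1) * α⌋₊ < 2 * ⌊(2:ℝ) ^ k * α⌋₊ + 2 := by
    rw [Nat.floor_lt h0]
    have hexp : (2:ℝ) ^ (k+1) * α = 2 * ((2:ℝ) ^ k * α) := by ring
    rw [hexp]
    push_cast
    linarith
  omega

lemma Xpos (hα1 : 1 < α) (k : ℕ) : 1 ≤ ⌊(2:ℝ) ^ k * α⌋₊ := by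
  have := Xge hα1 k
  have : 1 ≤ 2 ^ k := Nat.one_le_two_pow
  omega

lemma sge (hα1 : 1 < α) (k : ℕ) :
    k + 1 ≤ ∑ i ∈ Finset.range (k+1), ⌊(2:ℝ) ^ i * α⌋₊ := by
  calc k + 1 = ∑ _i ∈ Finset.range (k+1), 1 := by simp
  _ ≤ _ := Finset.sum_le_sum fun i _ => Xpos hα1 i

lemma bound (hα1 : 1 < α) (hα2 : α < 2) (k : ℕ) :
    ⌊(2:ℝ) ^ (k+1) * α⌋₊ ≤ (∑ i ∈ Finset.range (k+1), ⌊(2:ℝ) ^ i * α⌋₊) + (k + 2) := by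
  induction k with
  | zero =>
    have h1 := Xstep hα1 0
    have h0 := Xone hα1 hα2
    rw [Finset.sum_range_succ, Finset.sum_range_zero]
    omega
  | succ n ih =>
    have h1 := Xstep hα1 (n+1)
    rw [Finset.sum_range_succ]
    omega

lemma main (hα1 : 1 < α) (hα2 : α < 2) (k : ℕ) : ∀ z : ℤ,
    z.natAbs ≤ ∑ i ∈ Finset.range (k+1), ⌊(2:ℝ) ^ i * α⌋₊ →
    ∃ I J : Finset ℕ, I ⊆ Finset.range (k+1) ∧ J ⊆ Finset.range (k+1) ∧
      z = ((∑ i ∈ I, ⌊(2:ℝ) ^ i * α⌋₊ : ℕ) : ℤ) - ((∑ i ∈ J, ⌊(2:ℝ) ^ i * α⌋₊ : ℕ) : ℤ) := by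
  induction k with
  | zero =>
    intro z hz
    rw [Finset.sum_range_succ, Finset.sum_range_zero, Xone hα1 hα2] at hz
    have : z = -1 ∨ z = 0 ∨ z = 1 := by omega
    have h0 : ⌊α⌋₊ = 1 := by have := Xone hα1 hα2; rwa [pow_zero, one_mul] at this
    rcases this with h | h | h
    · refine ⟨∅, {0}, by simp, by simp, ?_⟩
      simp [h, h0]
    · exact ⟨∅, ∅, by simp, by simp, by simp [h]⟩
    · refine ⟨{0}, ∅, by simp, by simp, ?_⟩
      simp [h, h0]
  | succ n ih =>
    intro z hz
    by_cases hcase : z.natAbs ≤ ∑ i ∈ Finset.range (n+1), ⌊(2:ℝ) ^ i * α⌋₊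
    · obtain ⟨I, J, hI, hJ, heq⟩ := ih z hcase
      exact ⟨I, J, hI.trans (Finset.range_subset_range.2 (by omega)),
        hJ.trans (Finset.range_subset_range.2 (by omega)), heq⟩
    · have hb := bound hα1 hα2 n
      have hs := sge hα1 n
      have hsum : ∑ i ∈ Finset.range (n+2), ⌊(2:ℝ) ^ i * α⌋₊
          = (∑ i ∈ Finset.range (n+1), ⌊(2:ℝ) ^ i * α⌋₊) + ⌊(2:ℝ) ^ (n+1) * α⌋₊ :=
        Finset.sum_range_succ _ _
      rw [hsum] at hz
      by_cases hsign : 0 ≤ z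
      · have h' : (z - (⌊(2:ℝ) ^ (n+1) * α⌋₊ : ℤ)).natAbs
            ≤ ∑ i ∈ Finset.range (n+1), ⌊(2:ℝ) ^ i * α⌋₊ := by omega
        obtain ⟨I, J, hI, hJ, heq⟩ := ih _ h'
        have hnotI : n + 1 ∉ I := fun h => by simpa using hI h
        refine ⟨insert (n+1) I, J, ?_, hJ.trans (Finset.range_subset_range.2 (by omega)), ?_⟩
        · exact Finset.insert_subset (Finset.self_mem_range_succ _)
            (hI.trans (Finset.range_subset_range.2 (by omega)))
        · rw [Finset.sum_insert hnotI]
          push_cast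
          push_cast at heq
          linarith
      · have h' : (z + (⌊(2:ℝ) ^ (n+1) * α⌋₊ : ℤ)).natAbs
            ≤ ∑ i ∈ Finset.range (n+1), ⌊(2:ℝ) ^ i * α⌋₊ := by omega
        obtain ⟨I, J, hI, hJ, heq⟩ := ih _ h'
        have hnotJ : n + 1 ∉ J := fun h => by simpa using hJ h
        refine ⟨I, insert (n+1) J, hI.trans (Finset.range_subset_range.2 (by omega)), ?_, ?_⟩
        · exact Finset.insert_subset (Finset.self_mem_range_succ _)
            (hJ.trans (Finset.range_subset_range.2 (by omega)))
        · rw [Finset.sum_insert hnotJ]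
          push_cast
          push_cast at heq
          linarith

end C2aux

/-- `C₂ − C₂ = ℤ`: every integer is a difference of two elements
of `C₂ = FS({⌊2^n α⌋})`. -/
theorem C2_sub_C2_eq_Z
    (α : ℝ) (hα1 : 1 < α) (hα2 : α < 2)
    (ε : ℕ → ℕ) (hε : ∀ i, ε i ≤ 1) (hε0 : ε 0 = 1)
    (hsum : α = ∑' i, (ε i : ℝ) / 2 ^ i)
    (hinf : ∀ N : ℕ, ∃ i, N < i ∧ ε i ≠ 0) :
    ∀ z : ℤ, ∃ x ∈ FS (fun k => ⌊(2 : ℝ) ^ k * α⌋₊),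
      ∃ y ∈ FS (fun k => ⌊(2 : ℝ) ^ k * α⌋₊), z = (x : ℤ) - (y : ℤ) := by
  intro z
  have hs := C2aux.sge hα1 z.natAbs
  obtain ⟨I, J, _, _, heq⟩ := C2aux.main hα1 hα2 z.natAbs z (by omega)
  exact ⟨∑ i ∈ I, ⌊(2:ℝ) ^ i * α⌋₊, ⟨I, rfl⟩,
    ∑ i ∈ J, ⌊(2:ℝ) ^ i * α⌋₊, ⟨J, rfl⟩, heq⟩
end
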